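/- Let (V, root, parent, d, h) be a finite rooted tree with depth function d and height function h, let q ≥ 0 with q ≠ 1, and let w : V → ℝ be an exponential weighting for q. Suppose additionally that h (parent v) = h v + 1 for every node v ≠ root (all leaves are at the same depth h root). Then the weights are determined explicitly by depth: for every v ≠ root, w v = q^{d v − 1} · (1 − q) / (2 · (1 − q^{h root})). -/

import Mathlib

/-- For the exponential weighting of a finite rooted tree in which every non-root node's
parent has height exactly one more than the node (all leaves at the same depth `h root`),
the weights are given explicitly by depth:
`w v = q ^ (d v - 1) * (1 - q) / (2 * (1 - q ^ h root))` for every `v ≠ root`. -/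
theorem exponential_weighting_explicit
    {V : Type*} [Fintype V] [DecidableEq V]
    (root : V) (parent : V → V) (hparent : parent root = root)
    (d : V → ℕ) (hd0 : d root = 0)
    (hd : ∀ v, v ≠ root → d v = d (parent v) + 1)
    (h : V → ℕ)
    (hhleaf : ∀ v, (∀ u, u ≠ v → parent u ≠ v) → h v = 0)
    (hhnode : ∀ v, ¬ (∀ u, u ≠ v → parent u ≠ v) →
      h v = 1 + (Finset.univ.filter (fun u => u ≠ v ∧ parent u = v)).sup h)
    (q : ℝ) (hq0 : 0 ≤ q) (hq1 : q ≠ 1)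
    (w : V → ℝ) (S : V → ℝ)
    (hS0 : S root = w root)
    (hSrec : ∀ v, v ≠ root → S v = S (parent v) + w v)
    (hw0 : w root = 0)
    (hwrec : ∀ v, v ≠ root →
      w v = (1 / 2 - S (parent v)) * (1 - q) / (1 - q ^ (h v + 1)))
    (hperfect : ∀ v, v ≠ root → h (parent v) = h v + 1) :
    ∀ v, v ≠ root →
      w v = q ^ (d v - 1) * (1 - q) / (2 * (1 - q ^ h root)) := by
  -- q^n ≠ 1 for n ≥ 1
  have hqpow : ∀ n : ℕ, n ≠ 0 → q ^ n ≠ 1 := by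
    intro n hn
    rcases lt_or_gt_of_ne hq1 with hlt | hgt
    · exact ne_of_lt (pow_lt_one₀ hq0 hlt hn)
    · exact ne_of_gt (one_lt_pow₀ hgt hn)
  -- key invariant
  have key : ∀ n : ℕ, ∀ v : V, d v = n →
      (1 - q ^ h root) * (1 / 2 - S v) = 1 / 2 * q ^ d v * (1 - q ^ h v) := by
    intro n
    induction n using Nat.strong_induction_on with
    | _ n ih =>
      intro v hdv
      by_cases hv : v = root
      · subst hv; rw [hS0, hw0, hd0]; ring
      · have hdp : d v = d (parent v) + 1 := hd v hv
        have hlt : d (parent v) < n := by omega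
        have IH := ih (d (parent v)) hlt (parent v) rfl
        have hhp : h (parent v) = h v + 1 := hperfect v hv
        rw [hhp] at IH
        have hne : (1 : ℝ) - q ^ (h v + 1) ≠ 0 :=
          sub_ne_zero.mpr (Ne.symm (hqpow _ (Nat.succ_ne_zero _)))
        rw [hSrec v hv, hwrec v hv, hdp]
        field_simp
        linear_combination (2 * q * (1 - q ^ h v)) * IH
  intro v hv
  -- root has a child, so h root ≥ 1
  have hchild : ∃ u, u ≠ root ∧ parent u = root := by
    have : ∀ n : ℕ, ∀ u : V, d u = n → u ≠ root → ∃ u', u' ≠ root ∧ parent u' = root := by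
      intro n
      induction n using Nat.strong_induction_on with
      | _ n ih =>
        intro u hdu hu
        by_cases hp : parent u = root
        · exact ⟨u, hu, hp⟩
        · have := hd u hu
          exact ih (d (parent u)) (by omega) (parent u) rfl hp
    exact this (d v) v rfl hv
  have hHpos : 1 ≤ h root := by
    obtain ⟨u, hu, hpu⟩ := hchild
    have : ¬ (∀ u', u' ≠ root → parent u' ≠ root) := fun H => H u hu hpu
    rw [hhnode root this]; omega
  have hneH : (1 : ℝ) - q ^ h root ≠ 0 :=
    sub_ne_zero.mpr (Ne.symm (hqpow _ (by omega)))
  have hne : (1 : ℝ) - q ^ (h v + 1) ≠ 0 :=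
    sub_ne_zero.mpr (Ne.symm (hqpow _ (Nat.succ_ne_zero _)))
  have hdp : d v = d (parent v) + 1 := hd v hv
  have KP := key (d (parent v)) (parent v) rfl
  rw [hperfect v hv] at KP
  rw [hwrec v hv, hdp]
  have : d (parent v) + 1 - 1 = d (parent v) := by omega
  rw [this]
  field_simp
  linear_combination 2 * KP
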